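/- Let (F, d) be a finitely compact pseudometric space (every bounded sequence has a convergent subsequence). Then for every positive integer K, the space (F_K(F), d̄) of at-most-K-element subsets of F with the matching pseudometric d̄ is also finitely compact. -/

import Mathlib

/-- The matching distance `d̄` on `K`-tuples: minimum over permutations of the
maximal pairwise distance. -/
noncomputable def matchDist' {F : Type*} (d : F → F → ℝ) {K : ℕ} (hK : 0 < K)
    (A B : Fin K → F) : ℝ :=
  Finset.inf' (Finset.univ : Finset (Equiv.Perm (Fin K))) ⟨Equiv.refl _, by simp⟩
    (fun σ => Finset.sup' Finset.univ ⟨(⟨0, hK⟩ : Fin K), by simp⟩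
      (fun i => d (A i) (B (σ i))))

/-- Iterated subsequence extraction for finitely many bounded sequences. -/
private lemma extract_aux {F : Type*} (d : F → F → ℝ)
    (hfincompact : ∀ x : ℕ → F, (∃ C : ℝ, ∀ m n, d (x m) (x n) ≤ C) →
      ∃ (φ : ℕ → ℕ) (L : F), StrictMono φ ∧
        Filter.Tendsto (fun n => d (x (φ n)) L) Filter.atTop (nhds 0)) :
    ∀ (m : ℕ) (s : Fin m → ℕ → F),
      (∀ i, ∃ C : ℝ, ∀ p q, d (s i p) (s i q) ≤ C) →
      ∃ (φ : ℕ → ℕ) (L : Fin m → F), StrictMono φ ∧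
        ∀ i, Filter.Tendsto (fun n => d (s i (φ n)) (L i)) Filter.atTop (nhds 0) := by
  intro m
  induction m with
  | zero =>
    intro s _
    exact ⟨id, fun i => i.elim0, strictMono_id, fun i => i.elim0⟩
  | succ m ih =>
    intro s hb
    obtain ⟨φ₀, L₀, hφ₀, hL₀⟩ := ih (fun i => s i.castSucc) (fun i => hb i.castSucc)
    obtain ⟨C, hC⟩ := hb (Fin.last m)
    obtain ⟨φ₁, Ll, hφ₁, hLl⟩ := hfincompact (fun n => s (Fin.last m) (φ₀ n))
      ⟨C, fun p q => hC _ _⟩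
    refine ⟨φ₀ ∘ φ₁, Fin.lastCases Ll L₀, hφ₀.comp hφ₁, ?_⟩
    intro i
    refine Fin.lastCases ?_ ?_ i
    · simpa using hLl
    · intro j
      have := (hL₀ j).comp hφ₁.tendsto_atTop
      simpa [Function.comp_def] using this

theorem stmt12 {F : Type*} (d : F → F → ℝ)
    (hnonneg : ∀ x y, 0 ≤ d x y) (hrefl : ∀ x, d x x = 0)
    (hsymm : ∀ x y, d x y = d y x)
    (htri : ∀ x y z, d x z ≤ d x y + d y z)
    (hfincompact : ∀ x : ℕ → F, (∃ C : ℝ, ∀ m n, d (x m) (x n) ≤ C) →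
      ∃ (φ : ℕ → ℕ) (L : F), StrictMono φ ∧
        Filter.Tendsto (fun n => d (x (φ n)) L) Filter.atTop (nhds 0))
    (K : ℕ) (hK : 0 < K) :
    ∀ A : ℕ → Fin K → F,
      (∃ C : ℝ, ∀ m n, matchDist' d hK (A m) (A n) ≤ C) →
      ∃ (φ : ℕ → ℕ) (L : Fin K → F), StrictMono φ ∧
        Filter.Tendsto (fun n => matchDist' d hK (A (φ n)) L) Filter.atTop (nhds 0) := by
  intro A ⟨C, hC⟩
  -- each coordinate point of `A n` is within `C` of some coordinate of `A 0`
  have hnear : ∀ n i, ∃ j, d (A 0 j) (A n i) ≤ C := by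
    intro n i
    have h := hC 0 n
    unfold matchDist' at h
    obtain ⟨σ, -, hσ⟩ := Finset.exists_mem_eq_inf'
      (⟨Equiv.refl _, by simp⟩ : (Finset.univ : Finset (Equiv.Perm (Fin K))).Nonempty)
      (fun σ => Finset.sup' Finset.univ ⟨(⟨0, hK⟩ : Fin K), by simp⟩
        (fun i => d (A 0 i) (A n (σ i))))
    rw [hσ] at h
    refine ⟨σ.symm i, le_trans ?_ h⟩
    have := Finset.le_sup' (fun j => d (A 0 j) (A n (σ j))) (Finset.mem_univ (σ.symm i))
    simpa using this
  -- diameter of `A 0`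
  set D : ℝ := Finset.sup' Finset.univ ⟨(⟨0, hK⟩ : Fin K), by simp⟩
    (fun j => Finset.sup' Finset.univ ⟨(⟨0, hK⟩ : Fin K), by simp⟩
      (fun j' => d (A 0 j) (A 0 j'))) with hD
  have hDle : ∀ j j', d (A 0 j) (A 0 j') ≤ D := by
    intro j j'
    refine le_trans (Finset.le_sup' (fun j' => d (A 0 j) (A 0 j')) (Finset.mem_univ j')) ?_
    exact Finset.le_sup'
      (fun j => Finset.sup' Finset.univ ⟨(⟨0, hK⟩ : Fin K), by simp⟩
        (fun j' => d (A 0 j) (A 0 j'))) (Finset.mem_univ j)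
  -- each coordinate sequence is bounded
  have hcoord : ∀ i : Fin K, ∃ C' : ℝ, ∀ p q, d (A p i) (A q i) ≤ C' := by
    intro i
    refine ⟨C + D + C, fun p q => ?_⟩
    obtain ⟨j, hj⟩ := hnear p i
    obtain ⟨j', hj'⟩ := hnear q i
    calc d (A p i) (A q i) ≤ d (A p i) (A 0 j') + d (A 0 j') (A q i) := htri _ _ _
      _ ≤ (d (A p i) (A 0 j) + d (A 0 j) (A 0 j')) + d (A 0 j') (A q i) := by
          have := htri (A p i) (A 0 j) (A 0 j'); linarith
      _ ≤ C + D + C := by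
          have h1 : d (A p i) (A 0 j) ≤ C := by rw [hsymm]; exact hj
          have h2 := hDle j j'
          linarith
  obtain ⟨φ, L, hφ, hL⟩ := extract_aux d hfincompact K (fun i n => A n i) hcoord
  refine ⟨φ, L, hφ, ?_⟩
  -- squeeze between 0 and the sum of coordinate distances
  have hlow : ∀ n, 0 ≤ matchDist' d hK (A (φ n)) L := by
    intro n
    apply Finset.le_inf'
    intro σ _
    exact le_trans (hnonneg (A (φ n) ⟨0, hK⟩) (L (σ ⟨0, hK⟩)))
      (Finset.le_sup' (fun i => d (A (φ n) i) (L (σ i))) (Finset.mem_univ (⟨0, hK⟩ : Fin K)))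
  have hupp : ∀ n, matchDist' d hK (A (φ n)) L ≤ ∑ i : Fin K, d (A (φ n) i) (L i) := by
    intro n
    refine le_trans (Finset.inf'_le _ (Finset.mem_univ (Equiv.refl (Fin K)))) ?_
    apply Finset.sup'_le
    intro i _
    simpa using Finset.single_le_sum (f := fun i => d (A (φ n) i) (L i))
      (fun j _ => hnonneg _ _) (Finset.mem_univ i)
  have hsum : Filter.Tendsto (fun n => ∑ i : Fin K, d (A (φ n) i) (L i))
      Filter.atTop (nhds 0) := by
    have := tendsto_finset_sum (Finset.univ : Finset (Fin K))
      (fun i _ => hL i)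
    simpa using this
  exact squeeze_zero hlow hupp hsum
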